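/- Let S be a primitive numerical semigroup of genus g ≥ 1 with wt(S) > 0, and let t be the largest gap of S such that t−1 ∈ S (such a gap exists). Then t > 1, and S' = (S ∪ {t}) \ {t−1} is a primitive numerical semigroup of genus g and weight wt(S) − 1. -/

import Mathlib

/-- A numerical semigroup: a cofinite subset of `ℕ` containing `0` and closed under addition. -/
def IsNumSgp (S : Set ℕ) : Prop :=
  0 ∈ S ∧ (∀ a ∈ S, ∀ b ∈ S, a + b ∈ S) ∧ Sᶜ.Finite

/-- The genus of a numerical semigroup: the number of gaps. -/
noncomputable def genus (S : Set ℕ) : ℕ := Sᶜ.ncard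

/-- Primitivity: twice the smallest positive element exceeds the largest gap. -/
noncomputable def IsPrimitiveNS (S : Set ℕ) : Prop :=
  sSup Sᶜ < 2 * sInf {s | s ∈ S ∧ 0 < s}

/-- The weight of a numerical semigroup: `Σ_{n=1}^g (t_n − n)`, computed as the sum of the
gaps minus `1 + 2 + ⋯ + g`. -/
noncomputable def weight (S : Set ℕ) : ℕ :=
  (∑ᶠ t ∈ Sᶜ, t) - genus S * (genus S + 1) / 2

/-- Weight reduction: if `S` is a primitive numerical semigroup of genus `g ≥ 1` with
`wt(S) > 0`, and `t` is the largest gap of `S` with `t − 1 ∈ S`, then `t > 1` and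
`S' = (S ∪ {t}) \ {t−1}` is a primitive numerical semigroup of genus `g` and weight
`wt(S) − 1`. -/
theorem primitive_weight_reduction (S : Set ℕ) (hS : IsNumSgp S) (hP : IsPrimitiveNS S)
    (hg : 1 ≤ genus S) (hw : 0 < weight S) (t : ℕ)
    (ht : IsGreatest {u : ℕ | u ∉ S ∧ u - 1 ∈ S} t) :
    1 < t ∧ IsNumSgp ((S ∪ {t}) \ {t - 1}) ∧ IsPrimitiveNS ((S ∪ {t}) \ {t - 1}) ∧
      genus ((S ∪ {t}) \ {t - 1}) = genus S ∧
      weight ((S ∪ {t}) \ {t - 1}) = weight S - 1 := by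
  classical
  obtain ⟨h0S, hadd, hfin⟩ := hS
  obtain ⟨⟨htS, htm⟩, hmax'⟩ := ht
  have hmax : ∀ u : ℕ, u ∉ S → u - 1 ∈ S → u ≤ t := fun u h1 h2 => hmax' ⟨h1, h2⟩
  unfold IsPrimitiveNS at hP
  unfold genus at hg
  set m := sInf {s | s ∈ S ∧ 0 < s} with hm_def
  set T := sSup Sᶜ with hT_def
  have ht0 : t ≠ 0 := fun h => htS (h ▸ h0S)
  have hTub : ∀ x, x ∈ Sᶜ → x ≤ T := fun x hx => le_csSup hfin.bddAbove hx
  -- t > 1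
  have ht1 : 1 < t := by
    rcases Nat.lt_or_ge 1 t with h | h
    · exact h
    exfalso
    have heq : t = 1 := by omega
    have hne : Sᶜ.Nonempty := by
      rw [← Set.ncard_pos hfin]; omega
    have hTmem : T ∈ Sᶜ := Nat.sSup_mem hne hfin.bddAbove
    have hdesc : ∀ d, 1 ≤ T - d → (T - d) ∉ S := by
      intro d
      induction d with
      | zero => intro _; simpa using hTmem
      | succ n ih =>
        intro h1 hmem
        have h2 : 1 ≤ T - n := by omega
        have h3 : T - n ∉ S := ih h2
        have h4 : T - n - 1 ∈ S := by
          have : T - n - 1 = T - (n + 1) := by omega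
          rw [this]; exact hmem
        have := hmax _ h3 h4
        omega
    have hGeq : Sᶜ = Set.Icc 1 T := by
      ext x
      constructor
      · intro hx
        refine ⟨?_, hTub x hx⟩
        rcases Nat.eq_zero_or_pos x with h | h
        · exact absurd (h ▸ h0S) hx
        · exact h
      · rintro ⟨h1, h2⟩
        have h3 := hdesc (T - x) (by omega)
        have h4 : T - (T - x) = x := by omega
        rwa [h4] at h3
    have hg' : (Sᶜ : Set ℕ).ncard = T := by
      rw [hGeq, ← Finset.coe_Icc, Set.ncard_coe_finset, Nat.card_Icc]; omega
    have key : ∀ n : ℕ, (∑ x ∈ Finset.Icc 1 n, x) * 2 = n * (n + 1) := by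
      intro n
      induction n with
      | zero => simp
      | succ k ih =>
        rw [Finset.sum_Icc_succ_top (by omega)]
        ring_nf
        ring_nf at ih
        omega
    have hsum : ∑ᶠ x ∈ Sᶜ, x = T * (T + 1) / 2 := by
      rw [hGeq, ← Finset.coe_Icc, finsum_mem_coe_finset]
      have := key T
      omega
    unfold weight genus at hw
    rw [hsum, hg'] at hw
    omega
  -- basic facts
  have htT : t ≤ T := hTub t htS
  have hm1 : m ≤ t - 1 := Nat.sInf_le ⟨htm, by omega⟩
  have hposne : {s | s ∈ S ∧ 0 < s}.Nonempty := ⟨t - 1, htm, by omega⟩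
  have hmS : m ∈ S ∧ 0 < m := Nat.sInf_mem hposne
  have hbig : ∀ x : ℕ, T < x → x ∈ S := by
    intro x hx
    by_contra h
    exact absurd (hTub x h) (by omega)
  have h2t : 2 * t ∈ S := hbig _ (by omega)
  have hat : ∀ a, a ∈ S → 0 < a → a + t ∈ S := by
    intro a haS hap
    by_contra h
    have h1 : a + t - 1 ∈ S := by
      have h2 := hadd a haS (t - 1) htm
      have h3 : a + (t - 1) = a + t - 1 := by omega
      rwa [h3] at h2
    have := hmax _ h h1
    omega
  -- complement identity
  have hcomp : ((S ∪ {t}) \ {t - 1})ᶜ = (Sᶜ \ {t}) ∪ {t - 1} := by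
    ext x
    simp only [Set.mem_compl_iff, Set.mem_diff, Set.mem_union, Set.mem_singleton_iff]
    tauto
  have hfin' : ((S ∪ {t}) \ {t - 1})ᶜ.Finite := by
    rw [hcomp]
    exact (hfin.diff (t := {t})).union (Set.finite_singleton _)
  -- numerical semigroup
  have hNS : IsNumSgp ((S ∪ {t}) \ {t - 1}) := by
    have h0' : (0 : ℕ) ∈ (S ∪ {t}) \ {t - 1} := by
      refine ⟨Or.inl h0S, ?_⟩
      simp only [Set.mem_singleton_iff]
      omega
    refine ⟨h0', ?_, hfin'⟩
    rintro a ⟨ha1, ha2⟩ b ⟨hb1, hb2⟩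
    simp only [Set.mem_singleton_iff] at ha2 hb2
    have hstep : ∀ x y : ℕ, x ∈ S → x ≠ t - 1 → y ∈ S → y ≠ t - 1 → x + y ≠ t - 1 := by
      intro x y hx hx2 hy hy2 hxy
      rcases Nat.eq_zero_or_pos x with h | hxp
      · subst h; simp at hxy; omega
      rcases Nat.eq_zero_or_pos y with h | hyp
      · subst h; omega
      have h1 : m ≤ x := Nat.sInf_le ⟨hx, hxp⟩
      have h2 : m ≤ y := Nat.sInf_le ⟨hy, hyp⟩
      omega
    rcases ha1 with haS | hat' <;> rcases hb1 with hbS | hbt'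
    · exact ⟨Or.inl (hadd a haS b hbS), hstep a b haS ha2 hbS hb2⟩
    · simp only [Set.mem_singleton_iff] at hbt'
      rcases Nat.eq_zero_or_pos a with h | hap
      · refine ⟨Or.inr ?_, ?_⟩ <;> simp only [Set.mem_singleton_iff] <;> omega
      · refine ⟨Or.inl ?_, by simp only [Set.mem_singleton_iff]; omega⟩
        rw [hbt']; exact hat a haS hap
    · simp only [Set.mem_singleton_iff] at hat'
      rcases Nat.eq_zero_or_pos b with h | hbp
      · refine ⟨Or.inr ?_, ?_⟩ <;> simp only [Set.mem_singleton_iff] <;> omega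
      · refine ⟨Or.inl ?_, by simp only [Set.mem_singleton_iff]; omega⟩
        rw [hat', Nat.add_comm]; exact hat b hbS hbp
    · simp only [Set.mem_singleton_iff] at hat' hbt'
      refine ⟨Or.inl ?_, by simp only [Set.mem_singleton_iff]; omega⟩
      rw [hat', hbt', show t + t = 2 * t by ring]; exact h2t
  -- finset setup
  set F := hfin.toFinset with hF
  have hFc : (Sᶜ : Set ℕ) = ↑F := (Set.Finite.coe_toFinset hfin).symm
  have htF : t ∈ F := hfin.mem_toFinset.mpr htS
  have ht1F : t - 1 ∉ F := fun h => (hfin.mem_toFinset.mp h) htm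
  have ht1E : t - 1 ∉ F.erase t := fun h => ht1F (Finset.mem_of_mem_erase h)
  have hset : ((S ∪ {t}) \ {t - 1})ᶜ = ↑(insert (t - 1) (F.erase t)) := by
    rw [hcomp, Set.union_singleton, Finset.coe_insert, Finset.coe_erase, hFc]
  -- genus
  have hgenus : genus ((S ∪ {t}) \ {t - 1}) = genus S := by
    unfold genus
    rw [hset, Set.ncard_coe_finset, hFc, Set.ncard_coe_finset,
      Finset.card_insert_of_notMem ht1E, Finset.card_erase_of_mem htF]
    have : 1 ≤ F.card := Finset.card_pos.mpr ⟨t, htF⟩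
    omega
  -- sum
  have hsum' : (∑ᶠ x ∈ ((S ∪ {t}) \ {t - 1})ᶜ, x) + 1 = ∑ᶠ x ∈ Sᶜ, x := by
    rw [hset, hFc, finsum_mem_coe_finset, finsum_mem_coe_finset,
      Finset.sum_insert ht1E, ← Finset.add_sum_erase F (fun x => x) htF]
    omega
  -- weight
  have hweight : weight ((S ∪ {t}) \ {t - 1}) = weight S - 1 := by
    unfold weight at hw ⊢
    rw [hgenus]
    omega
  -- primitivity
  have hprim : IsPrimitiveNS ((S ∪ {t}) \ {t - 1}) := by
    unfold IsPrimitiveNS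
    have hub : sSup ((S ∪ {t}) \ {t - 1})ᶜ ≤ T := by
      apply csSup_le ⟨t - 1, by rw [hcomp]; right; rfl⟩
      intro x hx
      rw [hcomp] at hx
      rcases hx with ⟨hx1, _⟩ | hx2
      · exact hTub x hx1
      · simp only [Set.mem_singleton_iff] at hx2; omega
    have hlb : m ≤ sInf {s | s ∈ (S ∪ {t}) \ {t - 1} ∧ 0 < s} := by
      have hne' : {s | s ∈ (S ∪ {t}) \ {t - 1} ∧ 0 < s}.Nonempty :=
        ⟨2 * t, ⟨⟨Or.inl h2t, by simp only [Set.mem_singleton_iff]; omega⟩, by omega⟩⟩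
      apply le_csInf hne'
      rintro x ⟨⟨hx1, _⟩, hxp⟩
      rcases hx1 with h | h
      · exact Nat.sInf_le ⟨h, hxp⟩
      · simp only [Set.mem_singleton_iff] at h; omega
    calc sSup ((S ∪ {t}) \ {t - 1})ᶜ ≤ T := hub
      _ < 2 * m := hP
      _ ≤ 2 * sInf {s | s ∈ (S ∪ {t}) \ {t - 1} ∧ 0 < s} := by omega
  exact ⟨ht1, hNS, hprim, hgenus, hweight⟩
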